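/- For the tridiagonal QUBO chain, the unnormalized Half Partial Trace P_i(τ) = ∑_{x : x_0 = i} e^{−τ C(x)} equals the i-th entry of the vector obtained by the sequential contraction: P(τ) = diag(e^{−τ(w_{00}·i)})_i · (M_1 M_2 ⋯ M_{N−2} v), where (M_n)_{a,b} = e^{−τ(w_{n−1,n} a b + w_{nn} b)} and v_a = ∑_{b∈{0,1}} e^{−τ(w_{N−2,N−1} a b + w_{N−1,N−1} b)}. -/

import Mathlib

open Finset

noncomputable def Vaux (w : ℕ → ℕ → ℝ) (τ : ℝ) : ℕ → ℕ → Fin 2 → ℝ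
  | 0, _, _ => 1
  | k+1, n, a => ∑ b : Fin 2,
      Real.exp (-τ * (w n (n+1) * ((a:ℕ):ℝ) * ((b:ℕ):ℝ) + w (n+1) (n+1) * ((b:ℕ):ℝ))) *
        Vaux w τ k (n+1) b

lemma fold_eq (w : ℕ → ℕ → ℝ) (τ : ℝ) :
    ∀ (m n k : ℕ),
      (List.range' (n+1) m).foldr
        (fun n v => fun a : Fin 2 =>
          ∑ b : Fin 2,
            Real.exp (-τ * (w (n - 1) n * ((a : ℕ) : ℝ) * ((b : ℕ) : ℝ)
              + w n n * ((b : ℕ) : ℝ))) * v b)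
        (Vaux w τ k (n+m))
      = Vaux w τ (k+m) n := by
  intro m
  induction m with
  | zero => intro n k; simp
  | succ m ih =>
    intro n k
    rw [List.range'_succ, List.foldr_cons]
    have h1 : n + (m+1) = (n+1) + m := by omega
    rw [h1, ih (n+1) k]
    funext a
    show _ = Vaux w τ (k+(m+1)) n a
    have h2 : k + (m+1) = (k+m) + 1 := by omega
    rw [h2]
    simp [Vaux]

lemma Esum (w : ℕ → ℕ → ℝ) (τ : ℝ) :
    ∀ (k n : ℕ) (a : Fin 2),
      (∑ y : Fin k → Fin 2,
        Real.exp (-τ * ∑ j : Fin k,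
          (w (n + j) (n + j + 1) * ((((Fin.cons a y : Fin (k+1) → Fin 2) j.castSucc) : ℕ) : ℝ)
              * ((y j : ℕ) : ℝ)
            + w (n + j + 1) (n + j + 1) * ((y j : ℕ) : ℝ))))
      = Vaux w τ k n a := by
  intro k
  induction k with
  | zero => intro n a; simp [Vaux]
  | succ k ih =>
    intro n a
    rw [← (Fin.consEquiv fun _ : Fin (k+1) => Fin 2).sum_comp]
    rw [Fintype.sum_prod_type]
    show (∑ b : Fin 2, ∑ t : Fin k → Fin 2, _) = _
    have key : ∀ (b : Fin 2) (t : Fin k → Fin 2),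
        Real.exp (-τ * ∑ j : Fin (k+1),
          (w (n + j) (n + j + 1) * ((((Fin.cons a (Fin.cons b t) : Fin (k+2) → Fin 2) j.castSucc) : ℕ) : ℝ)
              * ((((Fin.cons b t : Fin (k+1) → Fin 2) j : Fin 2) : ℕ) : ℝ)
            + w (n + j + 1) (n + j + 1) * ((((Fin.cons b t : Fin (k+1) → Fin 2) j : Fin 2) : ℕ) : ℝ)))
        = Real.exp (-τ * (w n (n+1) * ((a:ℕ):ℝ) * ((b:ℕ):ℝ) + w (n+1) (n+1) * ((b:ℕ):ℝ))) *
          Real.exp (-τ * ∑ j : Fin k,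
            (w (n + 1 + j) (n + 1 + j + 1) * ((((Fin.cons b t : Fin (k+1) → Fin 2) j.castSucc) : ℕ) : ℝ)
                * ((t j : ℕ) : ℝ)
              + w (n + 1 + j + 1) (n + 1 + j + 1) * ((t j : ℕ) : ℝ))) := by
      intro b t
      rw [← Real.exp_add, Fin.sum_univ_succ]
      congr 1
      rw [neg_mul, neg_mul, neg_mul, ← neg_add, ← mul_add]
      congr 2
      congr 1
      apply Finset.sum_congr rfl
      intro j _
      have e1 : (Fin.cons a (Fin.cons b t) : Fin (k+2) → Fin 2) j.succ.castSucc
          = (Fin.cons b t : Fin (k+1) → Fin 2) j.castSucc := by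
        have h : (j.succ.castSucc : Fin (k+2)) = j.castSucc.succ := rfl
        rw [h, Fin.cons_succ]
      simp only [Fin.val_succ, Fin.cons_succ]
      have e2 : n + (↑j + 1) = n + 1 + ↑j := by omega
      rw [e1, e2]
    simp only [show ∀ (b : Fin 2) (t : Fin k → Fin 2),
        (Fin.consEquiv fun _ => Fin 2) (b, t) = Fin.cons b t from fun _ _ => rfl]
    rw [show Vaux w τ (k+1) n a = ∑ b : Fin 2,
        Real.exp (-τ * (w n (n+1) * ((a:ℕ):ℝ) * ((b:ℕ):ℝ) + w (n+1) (n+1) * ((b:ℕ):ℝ))) *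
          Vaux w τ k (n+1) b from rfl]
    apply Finset.sum_congr rfl
    intro b _
    rw [← ih (n+1) b, Finset.mul_sum]
    exact Finset.sum_congr rfl (fun t _ => key b t)

/-- For the tridiagonal QUBO chain, the unnormalized Half Partial Trace with first
variable fixed to `i` equals the sequential transfer-matrix contraction: the
first-site factor times the iterated product of the `2 × 2` matrices
`(M_n)_{a,b} = e^{-τ(w_{n-1,n} a b + w_{n,n} b)}` applied to the last-site vector. -/
theorem tridiagonal_trace_matrix_product (N : ℕ) (hN : 2 ≤ N) (hN0 : 0 < N)
    (w : ℕ → ℕ → ℝ) (τ : ℝ) (i : Fin 2) :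
    (∑ x : Fin N → Fin 2,
        if x ⟨0, hN0⟩ = i then
          Real.exp (-τ * ((∑ n ∈ Finset.range N,
              w n n * ((x ⟨n % N, Nat.mod_lt n hN0⟩ : ℕ) : ℝ))
            + ∑ n ∈ Finset.range (N - 1),
                w n (n + 1) * ((x ⟨n % N, Nat.mod_lt n hN0⟩ : ℕ) : ℝ) *
                  ((x ⟨(n + 1) % N, Nat.mod_lt (n + 1) hN0⟩ : ℕ) : ℝ)))
        else 0)
      = Real.exp (-τ * (w 0 0 * ((i : ℕ) : ℝ))) *
          ((List.range' 1 (N - 2)).foldr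
            (fun n v => fun a : Fin 2 =>
              ∑ b : Fin 2,
                Real.exp (-τ * (w (n - 1) n * ((a : ℕ) : ℝ) * ((b : ℕ) : ℝ)
                  + w n n * ((b : ℕ) : ℝ))) * v b)
            (fun a : Fin 2 =>
              ∑ b : Fin 2,
                Real.exp (-τ * (w (N - 2) (N - 1) * ((a : ℕ) : ℝ) * ((b : ℕ) : ℝ)
                  + w (N - 1) (N - 1) * ((b : ℕ) : ℝ))))
            i) := by
  obtain ⟨M, rfl⟩ : ∃ M, N = M + 2 := ⟨N - 2, by omega⟩
  -- RHS
  have hRHS : ((List.range' 1 (M + 2 - 2)).foldr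
            (fun n v => fun a : Fin 2 =>
              ∑ b : Fin 2,
                Real.exp (-τ * (w (n - 1) n * ((a : ℕ) : ℝ) * ((b : ℕ) : ℝ)
                  + w n n * ((b : ℕ) : ℝ))) * v b)
            (fun a : Fin 2 =>
              ∑ b : Fin 2,
                Real.exp (-τ * (w (M + 2 - 2) (M + 2 - 1) * ((a : ℕ) : ℝ) * ((b : ℕ) : ℝ)
                  + w (M + 2 - 1) (M + 2 - 1) * ((b : ℕ) : ℝ)))))
      = Vaux w τ (M + 1) 0 := by
    have hbase : (fun a : Fin 2 =>
        ∑ b : Fin 2,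
          Real.exp (-τ * (w (M + 2 - 2) (M + 2 - 1) * ((a : ℕ) : ℝ) * ((b : ℕ) : ℝ)
            + w (M + 2 - 1) (M + 2 - 1) * ((b : ℕ) : ℝ)))) = Vaux w τ 1 M := by
      funext a
      show _ = ∑ b : Fin 2, _ * Vaux w τ 0 (M+1) b
      simp [Vaux, show M + 2 - 2 = M from rfl, show M + 2 - 1 = M + 1 from rfl]
    rw [hbase, show M + 2 - 2 = M from rfl]
    have h := fold_eq w τ M 0 1
    rw [Nat.add_comm 1 M] at h
    simpa using h
  rw [hRHS]
  -- LHS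
  rw [← (Fin.consEquiv fun _ : Fin (M+2) => Fin 2).sum_comp]
  rw [Fintype.sum_prod_type]
  have hzero : ∀ (b : Fin 2) (t : Fin (M+1) → Fin 2),
      (Fin.cons b t : Fin (M+2) → Fin 2) ⟨0, hN0⟩ = b := fun b t => rfl
  simp only [show ∀ (b : Fin 2) (t : Fin (M+1) → Fin 2),
      (Fin.consEquiv fun _ => Fin 2) (b, t) = Fin.cons b t from fun _ _ => rfl]
  simp only [hzero]
  rw [Finset.sum_comm]
  simp only [Finset.sum_ite_eq' Finset.univ i, Finset.mem_univ, if_pos]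
  have E0 := Esum w τ (M+1) 0 i
  simp only [zero_add] at E0
  rw [← E0, Finset.mul_sum]
  apply Finset.sum_congr rfl
  intro t _
  rw [← Real.exp_add]
  congr 1
  have hmkd : ∀ j : Fin (M+2), (⟨(↑j : ℕ) % (M+2), Nat.mod_lt (↑j : ℕ) hN0⟩ : Fin (M+2)) = j :=
    fun j => Fin.ext (Nat.mod_eq_of_lt j.isLt)
  have hmk1 : ∀ j : Fin (M+1), (⟨(↑j : ℕ) % (M+2), Nat.mod_lt (↑j : ℕ) hN0⟩ : Fin (M+2)) = j.castSucc :=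
    fun j => Fin.ext (Nat.mod_eq_of_lt (by omega))
  have hmk2 : ∀ j : Fin (M+1), (⟨((↑j : ℕ) + 1) % (M+2), Nat.mod_lt ((↑j : ℕ) + 1) hN0⟩ : Fin (M+2)) = j.succ :=
    fun j => Fin.ext (Nat.mod_eq_of_lt (by omega))
  rw [show M + 2 - 1 = M + 1 from rfl]
  rw [← Fin.sum_univ_eq_sum_range
    (fun n => w n n * (((Fin.cons i t : Fin (M+2) → Fin 2) ⟨n % (M+2), Nat.mod_lt n hN0⟩ : ℕ) : ℝ)) (M+2)]
  rw [← Fin.sum_univ_eq_sum_range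
    (fun n => w n (n+1) * (((Fin.cons i t : Fin (M+2) → Fin 2) ⟨n % (M+2), Nat.mod_lt n hN0⟩ : ℕ) : ℝ)
      * (((Fin.cons i t : Fin (M+2) → Fin 2) ⟨(n+1) % (M+2), Nat.mod_lt (n+1) hN0⟩ : ℕ) : ℝ)) (M+1)]
  simp only [hmkd, hmk1, hmk2]
  rw [Fin.sum_univ_succ (f := fun j : Fin (M+2) =>
    w (↑j) (↑j) * (((Fin.cons i t : Fin (M+2) → Fin 2) j : ℕ) : ℝ))]
  simp only [Fin.cons_zero, Fin.cons_succ, Fin.val_zero, Fin.val_succ]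
  rw [Finset.sum_add_distrib]
  ring
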